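/- Let $\mu$ be an ergodic invariant probability measure for a Markov process $\Phi$ on a Polish space $\mathcal{X}$, and let $f$ be a measurable real-valued function. Suppose there exists a Borel set $\bar{\mathcal{X}}$ with $\mu(\bar{\mathcal{X}}) > 0$ such that $\sup_{t\ge 0}\mathbb{E}^x|f(\Phi_t)| < \infty$ for all $x\in\bar{\mathcal{X}}$. Then $f \in L^1(\mu)$. -/

import Mathlib

open MeasureTheory Filter Set ProbabilityTheory
open scoped ENNReal NNReal Topology

namespace Stmt6Aux

variable {X : Type*} [MeasurableSpace X]

lemma integrable_of_bounds {ν : Measure X} [IsFiniteMeasure ν] {u : X → ℝ} {C : ℝ}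
    (hu : Measurable u) (hb : ∀ x, |u x| ≤ C) : Integrable u ν :=
  (integrable_const C).mono' hu.aestronglyMeasurable (ae_of_all _ hb)

lemma jensen_sq {ν : Measure X} [IsProbabilityMeasure ν] {u : X → ℝ} {C : ℝ}
    (hu : Measurable u) (hb : ∀ x, |u x| ≤ C) :
    (∫ x, u x ∂ν) ^ 2 ≤ ∫ x, (u x) ^ 2 ∂ν := by
  have hui : Integrable u ν := integrable_of_bounds hu hb
  have hu2 : Integrable (fun x => (u x) ^ 2) ν := by
    refine integrable_of_bounds (hu.pow_const 2) (C := C ^ 2) (fun x => ?_)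
    rw [abs_pow, ← sq_abs]
    exact pow_le_pow_left₀ (abs_nonneg _) (by simpa using hb x) 2
  set a := ∫ x, u x ∂ν with ha
  have key : (0:ℝ) ≤ ∫ x, ((u x) ^ 2 - 2 * a * (u x) + a ^ 2) ∂ν := by
    have : ∀ x, (0:ℝ) ≤ (u x) ^ 2 - 2 * a * (u x) + a ^ 2 := by
      intro x; have := sq_nonneg (u x - a); nlinarith
    exact integral_nonneg this
  have e1 : ∫ x, ((u x) ^ 2 - 2 * a * (u x) + a ^ 2) ∂ν
      = ∫ x, (u x) ^ 2 ∂ν - 2 * a * a + a ^ 2 := by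
    have i1 : Integrable (fun x => (u x) ^ 2 - 2 * a * (u x)) ν := hu2.sub (hui.const_mul _)
    rw [integral_add i1 (integrable_const _), integral_sub hu2 (hui.const_mul _),
      integral_const_mul, integral_const]
    simp [measure_univ]
    exact Or.inl ha.symm
  rw [e1] at key
  nlinarith [key]

lemma abs_integral_le_sqrt {ν : Measure X} [IsProbabilityMeasure ν] {u : X → ℝ} {C c : ℝ}
    (hu : Measurable u) (hb : ∀ x, |u x| ≤ C) (hc : 0 ≤ c)
    (h2 : ∫ x, (u x) ^ 2 ∂ν ≤ c ^ 2) : ∫ x, |u x| ∂ν ≤ c := by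
  have habs : Measurable fun x => |u x| := hu.abs
  have h := jensen_sq (ν := ν) habs (C := C) (fun x => by simpa using hb x)
  simp only [sq_abs] at h
  have h0 : 0 ≤ ∫ x, |u x| ∂ν := integral_nonneg fun x => abs_nonneg _
  nlinarith [h.trans h2]


variable (P : ℝ≥0 → Kernel X X) [∀ t, IsMarkovKernel (P t)]

/-- The Markov operator. -/
noncomputable def T (t : ℝ≥0) (u : X → ℝ) (x : X) : ℝ := ∫ y, u y ∂((P t) x)

lemma measurable_T {u : X → ℝ} (hu : Measurable u) (t : ℝ≥0) :
    Measurable (T P t u) := by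
  have : StronglyMeasurable fun p : X × X => u p.2 :=
    hu.stronglyMeasurable.comp_measurable measurable_snd
  exact (this.integral_kernel_prod_right' (κ := P t)).measurable

lemma T_nonneg {u : X → ℝ} (h0 : ∀ x, 0 ≤ u x) (t : ℝ≥0) (x : X) :
    0 ≤ T P t u x := integral_nonneg fun y => h0 y

lemma T_le {u : X → ℝ} {C : ℝ} (hu : Measurable u) (h0 : ∀ x, 0 ≤ u x)
    (hC : ∀ x, u x ≤ C) (t : ℝ≥0) (x : X) : T P t u x ≤ C := by
  have hb : ∀ x, |u x| ≤ C := fun x => abs_le.2 ⟨by linarith [h0 x, (h0 x).trans (hC x)], hC x⟩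
  have : T P t u x ≤ ∫ _, C ∂((P t) x) :=
    integral_mono (integrable_of_bounds hu hb) (integrable_const C) hC
  simpa [integral_const, measure_univ] using this

lemma abs_T_le {u : X → ℝ} {C : ℝ} (hu : Measurable u) (h0 : ∀ x, 0 ≤ u x)
    (hC : ∀ x, u x ≤ C) (t : ℝ≥0) (x : X) : |T P t u x| ≤ C :=
  abs_le.2 ⟨by linarith [T_nonneg P h0 t x, (T_nonneg P h0 t x).trans (T_le P hu h0 hC t x)],
    T_le P hu h0 hC t x⟩

lemma ofReal_T {u : X → ℝ} {C : ℝ} (hu : Measurable u) (h0 : ∀ x, 0 ≤ u x)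
    (hC : ∀ x, u x ≤ C) (t : ℝ≥0) (x : X) :
    ENNReal.ofReal (T P t u x) = ∫⁻ y, ENNReal.ofReal (u y) ∂((P t) x) := by
  have hb : ∀ x, |u x| ≤ C := fun x => abs_le.2 ⟨by linarith [h0 x, (h0 x).trans (hC x)], hC x⟩
  exact ofReal_integral_eq_lintegral_ofReal (integrable_of_bounds hu hb) (ae_of_all _ h0)

lemma integral_T (μ : Measure X) [IsProbabilityMeasure μ]
    (hinv : ∀ t, μ.bind (fun x => P t x) = μ) {u : X → ℝ} {C : ℝ}
    (hu : Measurable u) (h0 : ∀ x, 0 ≤ u x) (hC : ∀ x, u x ≤ C) (t : ℝ≥0) :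
    ∫ x, T P t u x ∂μ = ∫ x, u x ∂μ := by
  have hTm : Measurable (T P t u) := measurable_T P hu t
  have h1 : ∫ x, T P t u x ∂μ
      = (∫⁻ x, ENNReal.ofReal (T P t u x) ∂μ).toReal :=
    integral_eq_lintegral_of_nonneg_ae (ae_of_all _ (T_nonneg P h0 t))
      hTm.aestronglyMeasurable
  have h2 : ∫ x, u x ∂μ = (∫⁻ x, ENNReal.ofReal (u x) ∂μ).toReal :=
    integral_eq_lintegral_of_nonneg_ae (ae_of_all _ h0) hu.aestronglyMeasurable
  rw [h1, h2]
  congr 1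
  calc ∫⁻ x, ENNReal.ofReal (T P t u x) ∂μ
      = ∫⁻ x, ∫⁻ y, ENNReal.ofReal (u y) ∂((P t) x) ∂μ := by
        refine lintegral_congr fun x => ?_
        exact ofReal_T P hu h0 hC t x
    _ = ∫⁻ y, ENNReal.ofReal (u y) ∂(μ.bind (fun x => (P t) x)) :=
        (Measure.lintegral_bind (P t).measurable.aemeasurable hu.ennreal_ofReal.aemeasurable).symm
    _ = ∫⁻ y, ENNReal.ofReal (u y) ∂μ := by rw [hinv t]

lemma T_comp (hsem : ∀ s t : ℝ≥0, P (s + t) = (P t).comp (P s)) {u : X → ℝ} {C : ℝ}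
    (hu : Measurable u) (h0 : ∀ x, 0 ≤ u x) (hC : ∀ x, u x ≤ C) (s t : ℝ≥0) (x : X) :
    T P s (T P t u) x = T P (s + t) u x := by
  have hTm : Measurable (T P t u) := measurable_T P hu t
  have h1 : T P s (T P t u) x
      = (∫⁻ y, ENNReal.ofReal (T P t u y) ∂((P s) x)).toReal :=
    integral_eq_lintegral_of_nonneg_ae (ae_of_all _ (T_nonneg P h0 t))
      hTm.aestronglyMeasurable
  have h2 : T P (s + t) u x
      = (∫⁻ y, ENNReal.ofReal (u y) ∂((P (s + t)) x)).toReal :=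
    integral_eq_lintegral_of_nonneg_ae (ae_of_all _ h0) hu.aestronglyMeasurable
  rw [h1, h2]
  congr 1
  calc ∫⁻ y, ENNReal.ofReal (T P t u y) ∂((P s) x)
      = ∫⁻ y, ∫⁻ z, ENNReal.ofReal (u z) ∂((P t) y) ∂((P s) x) := by
        refine lintegral_congr fun y => ofReal_T P hu h0 hC t y
    _ = ∫⁻ z, ENNReal.ofReal (u z) ∂(((P t).comp (P s)) x) :=
        (Kernel.lintegral_comp (P t) (P s) x hu.ennreal_ofReal).symm
    _ = ∫⁻ z, ENNReal.ofReal (u z) ∂((P (s + t)) x) := by rw [← hsem s t]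


lemma key (P : ℝ≥0 → Kernel X X) [∀ t, IsMarkovKernel (P t)]
    (hsem : ∀ s t : ℝ≥0, P (s + t) = (P t).comp (P s))
    (μ : Measure X) [IsProbabilityMeasure μ]
    (hinv : ∀ t, μ.bind (fun x => P t x) = μ)
    (herg : ∀ A : Set X, MeasurableSet A →
      (∀ t, ∀ᵐ x ∂μ, (P t) x A = A.indicator (fun _ => (1 : ℝ≥0∞)) x) →
      μ A = 0 ∨ μ A = 1)
    (f : X → ℝ) (hf : Measurable f)
    (B : Set X) (hBm : MeasurableSet B) (hBpos : 0 < μ B)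
    (m : ℝ) (hm : 0 ≤ m)
    (hBbound : ∀ t : ℝ≥0, ∀ᵐ x ∂μ, x ∈ B →
      ∫⁻ y, ENNReal.ofReal |f y| ∂((P t) x) ≤ ENNReal.ofReal m)
    (g : X → ℝ) (C : ℝ) (hg : Measurable g) (hg0 : ∀ x, 0 ≤ g x)
    (hgC : ∀ x, g x ≤ C) (hgf : ∀ x, g x ≤ |f x|) :
    ∫ x, g x ∂μ ≤ m := by
  classical
  -- basic facts
  obtain ⟨x0, -⟩ := nonempty_of_measure_ne_zero hBpos.ne'
  have hC0 : 0 ≤ C := (hg0 x0).trans (hgC x0)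
  have habs : ∀ (v : X → ℝ), (∀ x, 0 ≤ v x) → (∀ x, v x ≤ C) → ∀ x, |v x| ≤ C := by
    intro v h0 h1 x; exact abs_le.2 ⟨by linarith [h0 x], h1 x⟩
  have hint : ∀ (v : X → ℝ), Measurable v → (∀ x, 0 ≤ v x) → (∀ x, v x ≤ C) →
      Integrable v μ := fun v hv h0 h1 => integrable_of_bounds hv (habs v h0 h1)
  set Ig := ∫ x, g x ∂μ with hIg
  -- the convex set S
  set S : Set (X → ℝ) := {v | ∃ (n : ℕ) (w : Fin n → ℝ) (ts : Fin n → ℝ≥0),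
    (∀ i, 0 ≤ w i) ∧ (∑ i, w i) = 1 ∧ v = fun x => ∑ i, w i * T P (ts i) g x} with hS
  have hT_mem : ∀ t, T P t g ∈ S := by
    intro t
    exact ⟨1, fun _ => 1, fun _ => t, fun _ => zero_le_one, by simp, by funext x; simp⟩
  have hS_meas : ∀ v ∈ S, Measurable v := by
    rintro v ⟨n, w, ts, hw, hw1, rfl⟩
    exact Finset.measurable_sum _ fun i _ => (measurable_T P hg (ts i)).const_mul (w i)
  have hS_pt0 : ∀ v ∈ S, ∀ x, 0 ≤ v x := by
    rintro v ⟨n, w, ts, hw, hw1, rfl⟩ x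
    exact Finset.sum_nonneg fun i _ => mul_nonneg (hw i) (T_nonneg P hg0 (ts i) x)
  have hS_ptC : ∀ v ∈ S, ∀ x, v x ≤ C := by
    rintro v ⟨n, w, ts, hw, hw1, rfl⟩ x
    calc ∑ i, w i * T P (ts i) g x ≤ ∑ i, w i * C :=
          Finset.sum_le_sum fun i _ =>
            mul_le_mul_of_nonneg_left (T_le P hg hg0 hgC (ts i) x) (hw i)
      _ = 1 * C := by rw [← Finset.sum_mul, hw1]
      _ = C := one_mul C
  have hS_int : ∀ v ∈ S, Integrable v μ := fun v hv =>
    hint v (hS_meas v hv) (hS_pt0 v hv) (hS_ptC v hv)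
  have hS_I : ∀ v ∈ S, ∫ x, v x ∂μ = Ig := by
    rintro v ⟨n, w, ts, hw, hw1, rfl⟩
    have hi : ∀ i ∈ Finset.univ (α := Fin n),
        Integrable (fun x => w i * T P (ts i) g x) μ := by
      intro i _
      exact (hint _ (measurable_T P hg (ts i)) (T_nonneg P hg0 (ts i))
        (T_le P hg hg0 hgC (ts i))).const_mul _
    rw [integral_finset_sum _ hi]
    have : ∀ i ∈ Finset.univ (α := Fin n),
        ∫ x, w i * T P (ts i) g x ∂μ = w i * Ig := by
      intro i _
      rw [integral_const_mul, integral_T P μ hinv hg hg0 hgC]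
    rw [Finset.sum_congr rfl this, ← Finset.sum_mul, hw1, one_mul]
  have hTB : ∀ t, ∀ᵐ x ∂μ, x ∈ B → T P t g x ≤ m := by
    intro t
    filter_upwards [hBbound t] with x hx hxB
    have h1 : ENNReal.ofReal (T P t g x) ≤ ENNReal.ofReal m := by
      rw [ofReal_T P hg hg0 hgC t x]
      exact le_trans (lintegral_mono fun y => ENNReal.ofReal_le_ofReal (hgf y)) (hx hxB)
    exact (ENNReal.ofReal_le_ofReal_iff hm).1 h1
  have hS_B : ∀ v ∈ S, ∀ᵐ x ∂μ, x ∈ B → v x ≤ m := by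
    rintro v ⟨n, w, ts, hw, hw1, rfl⟩
    have : ∀ᵐ x ∂μ, ∀ i : Fin n, x ∈ B → T P (ts i) g x ≤ m :=
      (ae_all_iff).2 fun i => hTB (ts i)
    filter_upwards [this] with x hx hxB
    calc ∑ i, w i * T P (ts i) g x ≤ ∑ i, w i * m :=
          Finset.sum_le_sum fun i _ => mul_le_mul_of_nonneg_left (hx i hxB) (hw i)
      _ = m := by rw [← Finset.sum_mul, hw1, one_mul]
  have hS_mid : ∀ u v, u ∈ S → v ∈ S → (fun x => (u x + v x) / 2) ∈ S := by
    rintro u v ⟨n, w, ts, hw, hw1, rfl⟩ ⟨n', w', ts', hw', hw1', rfl⟩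
    refine ⟨n + n', Fin.append (fun i => w i / 2) (fun i => w' i / 2),
      Fin.append ts ts', ?_, ?_, ?_⟩
    · intro i
      refine Fin.addCases (fun i => ?_) (fun i => ?_) i
      · rw [Fin.append_left]; linarith [hw i]
      · rw [Fin.append_right]; linarith [hw' i]
    · rw [Fin.sum_univ_add]
      have e1 : ∀ i : Fin n, Fin.append (fun i => w i / 2) (fun i => w' i / 2)
          (Fin.castAdd n' i) = w i / 2 := fun i => Fin.append_left _ _ i
      have e2 : ∀ i : Fin n', Fin.append (fun i => w i / 2) (fun i => w' i / 2)
          (Fin.natAdd n i) = w' i / 2 := fun i => Fin.append_right _ _ i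
      simp_rw [e1, e2, ← Finset.sum_div]
      rw [hw1, hw1']; norm_num
    · funext x
      rw [Fin.sum_univ_add]
      have e1 : ∀ i : Fin n, Fin.append (fun i => w i / 2) (fun i => w' i / 2)
          (Fin.castAdd n' i) * T P (Fin.append ts ts' (Fin.castAdd n' i)) g x
          = w i / 2 * T P (ts i) g x := by
        intro i; rw [Fin.append_left, Fin.append_left]
      have e2 : ∀ i : Fin n', Fin.append (fun i => w i / 2) (fun i => w' i / 2)
          (Fin.natAdd n i) * T P (Fin.append ts ts' (Fin.natAdd n i)) g x
          = w' i / 2 * T P (ts' i) g x := by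
        intro i; rw [Fin.append_right, Fin.append_right]
      simp_rw [e1, e2]
      rw [add_div]
      congr 1
      · rw [Finset.sum_div]; exact Finset.sum_congr rfl fun i _ => by ring
      · rw [Finset.sum_div]; exact Finset.sum_congr rfl fun i _ => by ring
  have hS_T : ∀ v ∈ S, ∀ s : ℝ≥0, T P s v ∈ S := by
    rintro v ⟨n, w, ts, hw, hw1, rfl⟩ s
    refine ⟨n, w, fun i => s + ts i, hw, hw1, ?_⟩
    funext x
    have hi : ∀ i ∈ Finset.univ (α := Fin n),
        Integrable (fun y => w i * T P (ts i) g y) ((P s) x) := by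
      intro i _
      refine Integrable.const_mul ?_ _
      exact integrable_of_bounds (measurable_T P hg (ts i))
        (abs_T_le P hg hg0 hgC (ts i))
    show ∫ y, ∑ i, w i * T P (ts i) g y ∂((P s) x) = _
    rw [integral_finset_sum _ hi]
    refine Finset.sum_congr rfl fun i _ => ?_
    rw [integral_const_mul]
    congr 1
    exact T_comp P hsem hg hg0 hgC s (ts i) x
  -- squares
  have hsq_meas : ∀ (v : X → ℝ), Measurable v → Measurable (fun x => (v x) ^ 2) :=
    fun v hv => hv.pow_const 2
  have hsq_bd : ∀ (v : X → ℝ) (D : ℝ), (∀ x, |v x| ≤ D) → ∀ x, |(v x) ^ 2| ≤ D ^ 2 := by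
    intro v D hD x
    rw [abs_pow, ← sq_abs]
    exact pow_le_pow_left₀ (abs_nonneg _) (by simpa using hD x) 2
  have hsq_int : ∀ (v : X → ℝ) (D : ℝ), Measurable v → (∀ x, |v x| ≤ D) →
      Integrable (fun x => (v x) ^ 2) μ := by
    intro v D hv hD
    exact (integrable_const (D ^ 2)).mono' (hv.pow_const 2).aestronglyMeasurable
      (ae_of_all _ (hsq_bd v D hD))
  -- the infimum
  set Q : (X → ℝ) → ℝ := fun v => ∫ x, (v x) ^ 2 ∂μ with hQ
  set δ : ℝ := sInf (Q '' S) with hδ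
  have hQS_ne : (Q '' S).Nonempty := ⟨Q (T P 0 g), ⟨T P 0 g, hT_mem 0, rfl⟩⟩
  have hQS_bdd : ∀ y ∈ Q '' S, 0 ≤ y := by
    rintro y ⟨v, hv, rfl⟩
    exact integral_nonneg fun x => sq_nonneg _
  have hδ0 : 0 ≤ δ := le_csInf hQS_ne hQS_bdd
  have hδle : ∀ v ∈ S, δ ≤ Q v := fun v hv =>
    csInf_le ⟨0, fun y hy => hQS_bdd y hy⟩ ⟨v, hv, rfl⟩
  -- minimizing sequence
  have hseq : ∀ j : ℕ, ∃ v, v ∈ S ∧ Q v < δ + (1/4 : ℝ) ^ j := by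
    intro j
    obtain ⟨y, ⟨v, hv, rfl⟩, hy⟩ :=
      Real.lt_sInf_add_pos hQS_ne (ε := (1/4 : ℝ) ^ j) (by positivity)
    exact ⟨v, hv, hy⟩
  choose u hu_mem hu_lt using hseq
  have hu_meas : ∀ j, Measurable (u j) := fun j => hS_meas _ (hu_mem j)
  have hu_0 : ∀ j x, 0 ≤ u j x := fun j => hS_pt0 _ (hu_mem j)
  have hu_C : ∀ j x, u j x ≤ C := fun j => hS_ptC _ (hu_mem j)
  have hu_abs : ∀ j x, |u j x| ≤ C := fun j => habs _ (hu_0 j) (hu_C j)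
  -- L² Cauchy estimate
  have hpar : ∀ v v' : X → ℝ, Measurable v → Measurable v' →
      (∀ x, 0 ≤ v x) → (∀ x, v x ≤ C) → (∀ x, 0 ≤ v' x) → (∀ x, v' x ≤ C) →
      ∫ x, (v x - v' x) ^ 2 ∂μ = 2 * Q v + 2 * Q v' - 4 * Q (fun x => (v x + v' x) / 2) := by
    intro v v' hvm hv'm hv0 hvC hv'0 hv'C
    have hv : Measurable v := hvm
    have hv' : Measurable v' := hv'm
    have hid : ∀ x, (v x - v' x) ^ 2
        = 2 * (v x) ^ 2 + 2 * (v' x) ^ 2 - 4 * ((v x + v' x) / 2) ^ 2 := by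
      intro x; ring
    have hmid0 : ∀ x, 0 ≤ (v x + v' x) / 2 := fun x => by
      have := hv0 x; have := hv'0 x; positivity
    have hmidC : ∀ x, (v x + v' x) / 2 ≤ C := fun x => by
      have := hvC x; have := hv'C x; linarith
    have i1 : Integrable (fun x => 2 * (v x) ^ 2 + 2 * (v' x) ^ 2) μ :=
      ((hsq_int v C hv (habs v hv0 hvC)).const_mul 2).add
        ((hsq_int v' C hv' (habs v' hv'0 hv'C)).const_mul 2)
    have i2 : Integrable (fun x => 4 * ((v x + v' x) / 2) ^ 2) μ := by
      refine Integrable.const_mul ?_ 4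
      exact hsq_int _ C ((hv.add hv').div_const 2) (habs _ hmid0 hmidC)
    calc ∫ x, (v x - v' x) ^ 2 ∂μ
        = ∫ x, (2 * (v x) ^ 2 + 2 * (v' x) ^ 2 - 4 * ((v x + v' x) / 2) ^ 2) ∂μ := by
          refine integral_congr_ae (ae_of_all _ fun x => ?_); exact hid x
      _ = ∫ x, (2 * (v x) ^ 2 + 2 * (v' x) ^ 2) ∂μ
            - ∫ x, 4 * ((v x + v' x) / 2) ^ 2 ∂μ := integral_sub i1 i2
      _ = 2 * Q v + 2 * Q v' - 4 * Q (fun x => (v x + v' x) / 2) := by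
          rw [integral_add ((hsq_int v C hv (habs v hv0 hvC)).const_mul 2)
              ((hsq_int v' C hv' (habs v' hv'0 hv'C)).const_mul 2),
            integral_const_mul, integral_const_mul, integral_const_mul]
  have hcauchy : ∀ j k, ∫ x, (u j x - u k x) ^ 2 ∂μ
      ≤ 2 * (1/4 : ℝ) ^ j + 2 * (1/4 : ℝ) ^ k := by
    intro j k
    have h1 := hpar (u j) (u k) (hu_meas j) (hu_meas k) (hu_0 j) (hu_C j) (hu_0 k) (hu_C k)
    have h2 := hδle _ (hS_mid (u j) (u k) (hu_mem j) (hu_mem k))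
    have h3 := (hu_lt j).le
    have h4 := (hu_lt k).le
    rw [h1]; linarith
  -- a.e. convergence
  have hd_abs : ∀ j, ∫ x, |u (j+1) x - u j x| ∂μ ≤ 2 * (1/2 : ℝ) ^ j := by
    intro j
    refine abs_integral_le_sqrt ((hu_meas (j+1)).sub (hu_meas j)) (C := 2 * C)
      (fun x => ?_) (by positivity) ?_
    · calc |u (j+1) x - u j x| ≤ |u (j+1) x| + |u j x| := abs_sub _ _
        _ ≤ 2 * C := by linarith [hu_abs (j+1) x, hu_abs j x]
    · calc ∫ x, (u (j+1) x - u j x) ^ 2 ∂μ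
          ≤ 2 * (1/4 : ℝ) ^ (j+1) + 2 * (1/4 : ℝ) ^ j := hcauchy (j+1) j
        _ ≤ (2 * (1/2 : ℝ) ^ j) ^ 2 := by
            have : ((1:ℝ)/2) ^ j * ((1:ℝ)/2) ^ j = ((1:ℝ)/4) ^ j := by
              rw [← mul_pow]; norm_num
            have h14 : ((1:ℝ)/4) ^ (j+1) ≤ ((1:ℝ)/4) ^ j := by
              refine pow_le_pow_of_le_one (by norm_num) (by norm_num) (by omega)
            nlinarith [this]
  have hsum_fin : ∀ᵐ x ∂μ, Summable (fun j => |u (j+1) x - u j x|) := by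
    have hmeasd : ∀ j, Measurable fun x => ENNReal.ofReal (|u (j+1) x - u j x|) :=
      fun j => ((hu_meas (j+1)).sub (hu_meas j)).abs.ennreal_ofReal
    have hlt : ∫⁻ x, ∑' j, ENNReal.ofReal (|u (j+1) x - u j x|) ∂μ < ⊤ := by
      have hb : ∀ j, ∫⁻ x, ENNReal.ofReal (|u (j+1) x - u j x|) ∂μ
          ≤ ENNReal.ofReal (2 * (1/2 : ℝ) ^ j) := by
        intro j
        have hint' : Integrable (fun x => |u (j+1) x - u j x|) μ := by
          refine (integrable_const (2*C)).mono'
            ((hu_meas (j+1)).sub (hu_meas j)).abs.aestronglyMeasurable (ae_of_all _ fun x => ?_)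
          rw [Real.norm_eq_abs, abs_abs]
          calc |u (j+1) x - u j x| ≤ |u (j+1) x| + |u j x| := abs_sub _ _
            _ ≤ 2 * C := by linarith [hu_abs (j+1) x, hu_abs j x]
        rw [← ofReal_integral_eq_lintegral_ofReal hint' (ae_of_all _ fun x => abs_nonneg _)]
        exact ENNReal.ofReal_le_ofReal (hd_abs j)
      calc ∫⁻ x, ∑' j, ENNReal.ofReal (|u (j+1) x - u j x|) ∂μ
          = ∑' j, ∫⁻ x, ENNReal.ofReal (|u (j+1) x - u j x|) ∂μ := by
            rw [lintegral_tsum fun j => (hmeasd j).aemeasurable]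
        _ ≤ ∑' j, ENNReal.ofReal (2 * (1/2 : ℝ) ^ j) := ENNReal.tsum_le_tsum hb
        _ = ENNReal.ofReal (∑' j, 2 * (1/2 : ℝ) ^ j) := by
            rw [ENNReal.ofReal_tsum_of_nonneg (fun j => by positivity)
              ((summable_geometric_of_lt_one (by norm_num) (by norm_num)).mul_left 2)]
        _ < ⊤ := ENNReal.ofReal_lt_top
    have hmeas_sum : Measurable fun x => ∑' j, ENNReal.ofReal (|u (j+1) x - u j x|) :=
      Measurable.ennreal_tsum hmeasd
    filter_upwards [ae_lt_top hmeas_sum hlt.ne] with x hx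
    refine (summable_congr fun j => ?_).2 (ENNReal.summable_toReal hx.ne)
    exact (ENNReal.toReal_ofReal (abs_nonneg _)).symm
  have htendpt : ∀ᵐ x ∂μ, Tendsto (fun j => u j x) atTop
      (𝓝 (u 0 x + ∑' i, (u (i+1) x - u i x))) := by
    filter_upwards [hsum_fin] with x hx
    have hsum : Summable fun i => u (i+1) x - u i x := Summable.of_abs hx
    have h1 : Tendsto (fun j => ∑ i ∈ Finset.range j, (u (i+1) x - u i x)) atTop
        (𝓝 (∑' i, (u (i+1) x - u i x))) := hsum.hasSum.tendsto_sum_nat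
    have h2 : ∀ j, u 0 x + ∑ i ∈ Finset.range j, (u (i+1) x - u i x) = u j x := by
      intro j; rw [Finset.sum_range_sub (fun i => u i x)]; ring
    exact Tendsto.congr h2 (tendsto_const_nhds.add h1)
  -- the limit function
  set hfun : X → ℝ := fun x =>
    max 0 (min ((Filter.limsup (fun j => ENNReal.ofReal (u j x)) atTop).toReal) C) with hhfun
  have hh_meas : Measurable hfun := by
    refine measurable_const.max (Measurable.min ?_ measurable_const)
    exact (Measurable.limsup fun j => (hu_meas j).ennreal_ofReal).ennreal_toReal
  have hh_0 : ∀ x, 0 ≤ hfun x := fun x => le_max_left _ _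
  have hh_C : ∀ x, hfun x ≤ C := fun x => max_le hC0 (min_le_right _ _)
  have hh_abs : ∀ x, |hfun x| ≤ C := habs _ hh_0 hh_C
  have htend : ∀ᵐ x ∂μ, Tendsto (fun j => u j x) atTop (𝓝 (hfun x)) := by
    filter_upwards [htendpt] with x hx
    set c := u 0 x + ∑' i, (u (i+1) x - u i x) with hc
    have hc0 : 0 ≤ c := ge_of_tendsto hx (Eventually.of_forall fun j => hu_0 j x)
    have hcC : c ≤ C := le_of_tendsto hx (Eventually.of_forall fun j => hu_C j x)
    have h1 : Tendsto (fun j => ENNReal.ofReal (u j x)) atTop (𝓝 (ENNReal.ofReal c)) :=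
      (ENNReal.continuous_ofReal.tendsto _).comp hx
    have h2 : Filter.limsup (fun j => ENNReal.ofReal (u j x)) atTop = ENNReal.ofReal c :=
      h1.limsup_eq
    have h3 : hfun x = c := by
      rw [hhfun]
      simp only [h2, ENNReal.toReal_ofReal hc0]
      rw [min_eq_left hcC, max_eq_right hc0]
    rw [h3]; exact hx
  -- dominated convergence helper
  have hDCT : ∀ (v : ℕ → X → ℝ) (w : X → ℝ) (D : ℝ), (∀ j, Measurable (v j)) →
      (∀ j x, |v j x| ≤ D) → (∀ᵐ x ∂μ, Tendsto (fun j => v j x) atTop (𝓝 (w x))) →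
      Tendsto (fun j => ∫ x, v j x ∂μ) atTop (𝓝 (∫ x, w x ∂μ)) := by
    intro v w D hv hb hlim
    exact tendsto_integral_of_dominated_convergence (fun _ => D)
      (fun j => (hv j).aestronglyMeasurable) (integrable_const D)
      (fun j => ae_of_all _ fun x => by rw [Real.norm_eq_abs]; exact hb j x) hlim
  have hIh : ∫ x, hfun x ∂μ = Ig := by
    have h1 : Tendsto (fun j => ∫ x, u j x ∂μ) atTop (𝓝 (∫ x, hfun x ∂μ)) :=
      hDCT u hfun C hu_meas (fun j x => hu_abs j x) htend
    have h2 : (fun j => ∫ x, u j x ∂μ) = fun _ => Ig := funext fun j => hS_I _ (hu_mem j)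
    rw [h2] at h1
    exact tendsto_nhds_unique h1 tendsto_const_nhds
  have hQu_tend : Tendsto (fun j => Q (u j)) atTop (𝓝 δ) := by
    refine tendsto_of_tendsto_of_tendsto_of_le_of_le tendsto_const_nhds ?_
      (fun j => hδle _ (hu_mem j)) (fun j => (hu_lt j).le)
    have h1 : Tendsto (fun j : ℕ => δ + (1/4 : ℝ) ^ j) atTop (𝓝 (δ + 0)) :=
      tendsto_const_nhds.add (tendsto_pow_atTop_nhds_zero_of_lt_one (by norm_num) (by norm_num))
    simpa using h1
  have hQh : ∫ x, (hfun x) ^ 2 ∂μ = δ := by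
    have h1 : Tendsto (fun j => ∫ x, (u j x) ^ 2 ∂μ) atTop (𝓝 (∫ x, (hfun x) ^ 2 ∂μ)) := by
      refine hDCT (fun j x => (u j x) ^ 2) (fun x => (hfun x) ^ 2) (C ^ 2)
        (fun j => (hu_meas j).pow_const 2) (fun j x => hsq_bd _ C (hu_abs j) x) ?_
      filter_upwards [htend] with x hx
      exact hx.pow 2
    exact tendsto_nhds_unique h1 hQu_tend
  have hBh : ∀ᵐ x ∂μ, x ∈ B → hfun x ≤ m := by
    have hall : ∀ᵐ x ∂μ, ∀ j, x ∈ B → u j x ≤ m := (ae_all_iff).2 fun j => hS_B _ (hu_mem j)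
    filter_upwards [hall, htend] with x hx htx hxB
    exact le_of_tendsto htx (Eventually.of_forall fun j => hx j hxB)
  set ε : ℕ → ℝ := fun j => ∫ x, (hfun x - u j x) ^ 2 ∂μ with hε
  have hdiff_abs : ∀ j x, |hfun x - u j x| ≤ 2 * C := by
    intro j x
    calc |hfun x - u j x| ≤ |hfun x| + |u j x| := abs_sub _ _
      _ ≤ 2 * C := by linarith [hh_abs x, hu_abs j x]
  have hε0 : ∀ j, 0 ≤ ε j := fun j => integral_nonneg fun x => sq_nonneg _
  have hεtend : Tendsto ε atTop (𝓝 0) := by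
    have h1 := hDCT (fun j x => (hfun x - u j x) ^ 2) (fun _ => 0) ((2*C) ^ 2)
      (fun j => (hh_meas.sub (hu_meas j)).pow_const 2)
      (fun j x => hsq_bd _ (2*C) (fun y => hdiff_abs j y) x) ?_
    · simpa using h1
    · filter_upwards [htend] with x hx
      have h2 : Tendsto (fun j => hfun x - u j x) atTop (𝓝 (hfun x - hfun x)) :=
        tendsto_const_nhds.sub hx
      rw [sub_self] at h2
      simpa using h2.pow 2
  have hsqrt_tend : Tendsto (fun j => Real.sqrt (ε j)) atTop (𝓝 0) := by
    have := (Real.continuous_sqrt.tendsto 0).comp hεtend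
    simpa [Real.sqrt_zero, Function.comp_def] using this
  -- L¹ distances
  have hL1 : ∀ j, ∫ x, |hfun x - u j x| ∂μ ≤ Real.sqrt (ε j) := by
    intro j
    refine abs_integral_le_sqrt (hh_meas.sub (hu_meas j)) (C := 2*C)
      (fun x => hdiff_abs j x) (Real.sqrt_nonneg _) ?_
    rw [Real.sq_sqrt (hε0 j)]
  -- closeness of integrals of squares
  have sq_close : ∀ (v w : X → ℝ), Measurable v → Measurable w →
      (∀ x, 0 ≤ v x) → (∀ x, v x ≤ C) → (∀ x, 0 ≤ w x) → (∀ x, w x ≤ C) →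
      ∀ c : ℝ, 0 ≤ c → (∫ x, |v x - w x| ∂μ ≤ c) → |Q v - Q w| ≤ 2 * C * c := by
    intro v w hv hw hv0 hvC hw0 hwC c hc hL
    have hptw : ∀ x, |(v x) ^ 2 - (w x) ^ 2| ≤ 2 * C * |v x - w x| := by
      intro x
      have : (v x) ^ 2 - (w x) ^ 2 = (v x - w x) * (v x + w x) := by ring
      rw [this, abs_mul]
      have h1 : |v x + w x| ≤ 2 * C := by
        rw [abs_of_nonneg (by linarith [hv0 x, hw0 x])]
        linarith [hvC x, hwC x]
      calc |v x - w x| * |v x + w x| ≤ |v x - w x| * (2 * C) :=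
            mul_le_mul_of_nonneg_left h1 (abs_nonneg _)
        _ = 2 * C * |v x - w x| := by ring
    have i1 : Integrable (fun x => (v x) ^ 2 - (w x) ^ 2) μ :=
      (hsq_int v C hv (habs v hv0 hvC)).sub (hsq_int w C hw (habs w hw0 hwC))
    have i2 : Integrable (fun x => |v x - w x|) μ := by
      refine (integrable_const (2*C)).mono' (hv.sub hw).abs.aestronglyMeasurable
        (ae_of_all _ fun x => ?_)
      rw [Real.norm_eq_abs, abs_abs]
      calc |v x - w x| ≤ |v x| + |w x| := abs_sub _ _
        _ ≤ 2 * C := by linarith [habs v hv0 hvC x, habs w hw0 hwC x]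
    have h1 : Q v - Q w = ∫ x, ((v x) ^ 2 - (w x) ^ 2) ∂μ :=
      (integral_sub (hsq_int v C hv (habs v hv0 hvC)) (hsq_int w C hw (habs w hw0 hwC))).symm
    rw [h1]
    calc |∫ x, ((v x) ^ 2 - (w x) ^ 2) ∂μ| ≤ ∫ x, |(v x) ^ 2 - (w x) ^ 2| ∂μ := by
          simpa [Real.norm_eq_abs] using norm_integral_le_integral_norm
            (fun x => (v x) ^ 2 - (w x) ^ 2) (μ := μ)
      _ ≤ ∫ x, 2 * C * |v x - w x| ∂μ :=
          integral_mono i1.abs (i2.const_mul _) (fun x => hptw x)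
      _ = 2 * C * ∫ x, |v x - w x| ∂μ := integral_const_mul _ _
      _ ≤ 2 * C * c := by
          have h2C : (0:ℝ) ≤ 2 * C := by linarith
          exact mul_le_mul_of_nonneg_left hL h2C
  -- the fixed point property for every s
  have hvar : ∀ s : ℝ≥0, ∀ᵐ x ∂μ, ((P s) x) {y | hfun y ≠ hfun x} = 0 := by
    intro s
    set Th : X → ℝ := T P s hfun with hTh
    have hTh_meas : Measurable Th := measurable_T P hh_meas s
    have hTh_0 : ∀ x, 0 ≤ Th x := T_nonneg P hh_0 s
    have hTh_C : ∀ x, Th x ≤ C := T_le P hh_meas hh_0 hh_C s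
    have hTu_mem : ∀ j, T P s (u j) ∈ S := fun j => hS_T _ (hu_mem j) s
    have hTu_meas : ∀ j, Measurable (T P s (u j)) := fun j => measurable_T P (hu_meas j) s
    have hTu_0 : ∀ j x, 0 ≤ T P s (u j) x := fun j => T_nonneg P (hu_0 j) s
    have hTu_C : ∀ j x, T P s (u j) x ≤ C := fun j => T_le P (hu_meas j) (hu_0 j) (hu_C j) s
    -- contraction
    have hcontr : ∀ j, ∫ x, (Th x - T P s (u j) x) ^ 2 ∂μ ≤ ε j := by
      intro j
      have hptw : ∀ x, (Th x - T P s (u j) x) ^ 2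
          ≤ T P s (fun y => (hfun y - u j y) ^ 2) x := by
        intro x
        have hsub : Th x - T P s (u j) x = ∫ y, (hfun y - u j y) ∂((P s) x) := by
          rw [integral_sub (integrable_of_bounds hh_meas hh_abs)
            (integrable_of_bounds (hu_meas j) (hu_abs j))]
          rfl
        rw [hsub]
        exact jensen_sq (hh_meas.sub (hu_meas j)) (C := 2*C) (fun y => hdiff_abs j y)
      have hTm2 : Measurable (T P s (fun y => (hfun y - u j y) ^ 2)) :=
        measurable_T P ((hh_meas.sub (hu_meas j)).pow_const 2) s
      have hT2_0 : ∀ x, 0 ≤ T P s (fun y => (hfun y - u j y) ^ 2) x :=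
        T_nonneg P (fun y => sq_nonneg _) s
      have hT2_C : ∀ x, T P s (fun y => (hfun y - u j y) ^ 2) x ≤ (2*C) ^ 2 := by
        refine T_le P ((hh_meas.sub (hu_meas j)).pow_const 2) (fun y => sq_nonneg _)
          (fun y => ?_) s
        have := hsq_bd _ (2*C) (fun z => hdiff_abs j z) y
        calc (hfun y - u j y) ^ 2 = |(hfun y - u j y) ^ 2| := (abs_of_nonneg (sq_nonneg _)).symm
          _ ≤ (2*C) ^ 2 := this
      calc ∫ x, (Th x - T P s (u j) x) ^ 2 ∂μ
          ≤ ∫ x, T P s (fun y => (hfun y - u j y) ^ 2) x ∂μ := by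
            refine integral_mono ?_ ?_ hptw
            · exact hsq_int _ (2*C) (hTh_meas.sub (hTu_meas j)) (fun x => by
                calc |Th x - T P s (u j) x| ≤ |Th x| + |T P s (u j) x| := abs_sub _ _
                  _ ≤ 2 * C := by
                    have h1 := habs _ hTh_0 hTh_C x
                    have h2 := habs _ (hTu_0 j) (hTu_C j) x
                    linarith)
            · exact integrable_of_bounds hTm2 (fun x =>
                abs_le.2 ⟨by nlinarith [hT2_0 x, sq_nonneg (2*C)], hT2_C x⟩)
        _ = ε j := integral_T P μ hinv ((hh_meas.sub (hu_meas j)).pow_const 2)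
              (fun y => sq_nonneg _) (fun y => by
                have := hsq_bd _ (2*C) (fun z => hdiff_abs j z) y
                calc (hfun y - u j y) ^ 2 = |(hfun y - u j y) ^ 2| :=
                      (abs_of_nonneg (sq_nonneg _)).symm
                  _ ≤ (2*C) ^ 2 := this) s
    -- L¹ distance between Th and T (u j)
    have hTL1 : ∀ j, ∫ x, |Th x - T P s (u j) x| ∂μ ≤ Real.sqrt (ε j) := by
      intro j
      refine abs_integral_le_sqrt (hTh_meas.sub (hTu_meas j)) (C := 2*C)
        (fun x => ?_) (Real.sqrt_nonneg _) ?_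
      · calc |Th x - T P s (u j) x| ≤ |Th x| + |T P s (u j) x| := abs_sub _ _
          _ ≤ 2 * C := by
              have h1 := habs _ hTh_0 hTh_C x
              have h2 := habs _ (hTu_0 j) (hTu_C j) x
              linarith
      · rw [Real.sq_sqrt (hε0 j)]; exact hcontr j
    -- δ ≤ Q Th
    have hQTh_ge : δ ≤ Q Th := by
      have hj : ∀ j, δ ≤ Q Th + 2 * C * Real.sqrt (ε j) := by
        intro j
        have h1 : δ ≤ Q (T P s (u j)) := hδle _ (hTu_mem j)
        have h2 : |Q Th - Q (T P s (u j))| ≤ 2 * C * Real.sqrt (ε j) :=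
          sq_close Th (T P s (u j)) hTh_meas (hTu_meas j) hTh_0 hTh_C (hTu_0 j) (hTu_C j)
            (Real.sqrt (ε j)) (Real.sqrt_nonneg _) (hTL1 j)
        have h3 := abs_le.1 h2
        linarith [h3.1]
      have hlim : Tendsto (fun j => Q Th + 2 * C * Real.sqrt (ε j)) atTop
          (𝓝 (Q Th + 2 * C * 0)) :=
        tendsto_const_nhds.add (hsqrt_tend.const_mul (2*C))
      have := ge_of_tendsto hlim (Eventually.of_forall hj)
      simpa using this
    -- Q Th ≤ δ
    have hQTh_le : Q Th ≤ δ := by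
      have hptw : ∀ x, (Th x) ^ 2 ≤ T P s (fun y => (hfun y) ^ 2) x := fun x =>
        jensen_sq hh_meas (C := C) hh_abs
      have hTm2 : Measurable (T P s (fun y => (hfun y) ^ 2)) :=
        measurable_T P (hh_meas.pow_const 2) s
      have hsq_0 : ∀ y, (0:ℝ) ≤ (hfun y) ^ 2 := fun y => sq_nonneg _
      have hsq_C : ∀ y, (hfun y) ^ 2 ≤ C ^ 2 := fun y => by
        calc (hfun y) ^ 2 = |(hfun y) ^ 2| := (abs_of_nonneg (sq_nonneg _)).symm
          _ ≤ C ^ 2 := hsq_bd _ C hh_abs y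
      calc Q Th ≤ ∫ x, T P s (fun y => (hfun y) ^ 2) x ∂μ := by
            refine integral_mono (hsq_int _ C hTh_meas (habs _ hTh_0 hTh_C)) ?_ hptw
            exact integrable_of_bounds hTm2 (fun x => abs_le.2
              ⟨by nlinarith [T_nonneg P hsq_0 s x, sq_nonneg C], T_le P (hh_meas.pow_const 2) hsq_0 hsq_C s x⟩)
        _ = ∫ x, (hfun x) ^ 2 ∂μ :=
            integral_T P μ hinv (hh_meas.pow_const 2) hsq_0 hsq_C s
        _ = δ := hQh
    have hQTh : Q Th = δ := le_antisymm hQTh_le hQTh_ge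
    -- midpoint
    have hmid_ge : δ ≤ Q (fun x => (hfun x + Th x) / 2) := by
      set vH : X → ℝ := fun x => (hfun x + Th x) / 2 with hvH
      have hvH_meas : Measurable vH := (hh_meas.add hTh_meas).div_const 2
      have hvH_0 : ∀ x, 0 ≤ vH x := fun x => by
        have := hh_0 x; have := hTh_0 x; positivity
      have hvH_C : ∀ x, vH x ≤ C := fun x => by
        have h1 := hh_C x; have h2 := hTh_C x
        show (hfun x + Th x) / 2 ≤ C
        linarith
      have hj : ∀ j, δ ≤ Q vH + 2 * C * Real.sqrt (ε j) := by
        intro j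
        set vj : X → ℝ := fun x => (u j x + T P s (u j) x) / 2 with hvj
        have hvj_mem : vj ∈ S := hS_mid _ _ (hu_mem j) (hTu_mem j)
        have hvj_meas : Measurable vj := hS_meas _ hvj_mem
        have hvj_0 : ∀ x, 0 ≤ vj x := hS_pt0 _ hvj_mem
        have hvj_C : ∀ x, vj x ≤ C := hS_ptC _ hvj_mem
        have hclose_pt : ∀ x, |vH x - vj x|
            ≤ (|hfun x - u j x| + |Th x - T P s (u j) x|) / 2 := by
          intro x
          have he : vH x - vj x = ((hfun x - u j x) + (Th x - T P s (u j) x)) / 2 := by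
            show (hfun x + Th x) / 2 - (u j x + T P s (u j) x) / 2 = _
            ring
          rw [he, abs_div, abs_of_nonneg (by norm_num : (0:ℝ) ≤ 2)]
          have := abs_add_le (hfun x - u j x) (Th x - T P s (u j) x)
          linarith
        have hL1vj : ∫ x, |vH x - vj x| ∂μ ≤ Real.sqrt (ε j) := by
          have i1 : Integrable (fun x => |vH x - vj x|) μ := by
            refine (integrable_const C).mono'
              (hvH_meas.sub hvj_meas).abs.aestronglyMeasurable (ae_of_all _ fun x => ?_)
            rw [Real.norm_eq_abs, abs_abs]
            exact abs_le.2 ⟨by linarith [hvH_0 x, hvj_C x], by linarith [hvH_C x, hvj_0 x]⟩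
          have i2 : Integrable
              (fun x => (|hfun x - u j x| + |Th x - T P s (u j) x|) / 2) μ := by
            refine Integrable.div_const (Integrable.add ?_ ?_) 2
            · refine (integrable_const (2*C)).mono'
                (hh_meas.sub (hu_meas j)).abs.aestronglyMeasurable (ae_of_all _ fun x => ?_)
              rw [Real.norm_eq_abs, abs_abs]; exact hdiff_abs j x
            · refine (integrable_const (2*C)).mono'
                (hTh_meas.sub (hTu_meas j)).abs.aestronglyMeasurable (ae_of_all _ fun x => ?_)
              rw [Real.norm_eq_abs, abs_abs]
              calc |Th x - T P s (u j) x| ≤ |Th x| + |T P s (u j) x| := abs_sub _ _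
                _ ≤ 2 * C := by
                    have h1 := habs _ hTh_0 hTh_C x
                    have h2 := habs _ (hTu_0 j) (hTu_C j) x
                    linarith
          calc ∫ x, |vH x - vj x| ∂μ
              ≤ ∫ x, (|hfun x - u j x| + |Th x - T P s (u j) x|) / 2 ∂μ :=
                integral_mono i1 i2 hclose_pt
            _ = ((∫ x, |hfun x - u j x| ∂μ) + ∫ x, |Th x - T P s (u j) x| ∂μ) / 2 := by
                rw [integral_div, integral_add]
                · refine (integrable_const (2*C)).mono'
                    (hh_meas.sub (hu_meas j)).abs.aestronglyMeasurable (ae_of_all _ fun x => ?_)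
                  rw [Real.norm_eq_abs, abs_abs]; exact hdiff_abs j x
                · refine (integrable_const (2*C)).mono'
                    (hTh_meas.sub (hTu_meas j)).abs.aestronglyMeasurable
                    (ae_of_all _ fun x => ?_)
                  rw [Real.norm_eq_abs, abs_abs]
                  calc |Th x - T P s (u j) x| ≤ |Th x| + |T P s (u j) x| := abs_sub _ _
                    _ ≤ 2 * C := by
                        have h1 := habs _ hTh_0 hTh_C x
                        have h2 := habs _ (hTu_0 j) (hTu_C j) x
                        linarith
            _ ≤ (Real.sqrt (ε j) + Real.sqrt (ε j)) / 2 := by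
                have h1 := hL1 j
                have h2 := hTL1 j
                linarith
            _ = Real.sqrt (ε j) := by ring
        have h2 : |Q vH - Q vj| ≤ 2 * C * Real.sqrt (ε j) :=
          sq_close vH vj hvH_meas hvj_meas hvH_0 hvH_C hvj_0 hvj_C
            (Real.sqrt (ε j)) (Real.sqrt_nonneg _) hL1vj
        have h1 : δ ≤ Q vj := hδle _ hvj_mem
        have h3 := abs_le.1 h2
        linarith [h3.1]
      have hlim : Tendsto (fun j => Q vH + 2 * C * Real.sqrt (ε j)) atTop
          (𝓝 (Q vH + 2 * C * 0)) :=
        tendsto_const_nhds.add (hsqrt_tend.const_mul (2*C))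
      have := ge_of_tendsto hlim (Eventually.of_forall hj)
      simpa using this
    -- parallelogram identity gives the fixed point
    have hfixa : ∀ᵐ x ∂μ, Th x = hfun x := by
      have hp := hpar hfun Th hh_meas hTh_meas hh_0 hh_C hTh_0 hTh_C
      have hQhfun : Q hfun = δ := hQh
      have h0 : ∫ x, (hfun x - Th x) ^ 2 ∂μ ≤ 0 := by
        rw [hp]; rw [hQhfun, hQTh]; linarith [hmid_ge]
      have hz : ∫ x, (hfun x - Th x) ^ 2 ∂μ = 0 :=
        le_antisymm h0 (integral_nonneg fun x => sq_nonneg _)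
      have hintz : Integrable (fun x => (hfun x - Th x) ^ 2) μ := by
        refine hsq_int _ (2*C) (hh_meas.sub hTh_meas) (fun x => ?_)
        calc |hfun x - Th x| ≤ |hfun x| + |Th x| := abs_sub _ _
          _ ≤ 2 * C := by linarith [hh_abs x, habs _ hTh_0 hTh_C x]
      have := (integral_eq_zero_iff_of_nonneg_ae
        (ae_of_all _ fun x => sq_nonneg (hfun x - Th x)) hintz).1 hz
      filter_upwards [this] with x hx
      have hx' : (hfun x - Th x) ^ 2 = 0 := hx
      have := sub_eq_zero.1 (pow_eq_zero_iff two_ne_zero |>.1 hx')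
      exact this.symm
    -- equality in Jensen
    have hsq_0 : ∀ y, (0:ℝ) ≤ (hfun y) ^ 2 := fun y => sq_nonneg _
    have hsq_C : ∀ y, (hfun y) ^ 2 ≤ C ^ 2 := fun y => by
      calc (hfun y) ^ 2 = |(hfun y) ^ 2| := (abs_of_nonneg (sq_nonneg _)).symm
        _ ≤ C ^ 2 := hsq_bd _ C hh_abs y
    have hjeq : ∀ᵐ x ∂μ, T P s (fun y => (hfun y) ^ 2) x = (Th x) ^ 2 := by
      have hTm2 : Measurable (T P s (fun y => (hfun y) ^ 2)) :=
        measurable_T P (hh_meas.pow_const 2) s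
      have hint1 : Integrable (T P s fun y => (hfun y) ^ 2) μ :=
        integrable_of_bounds hTm2 (fun x => abs_le.2
          ⟨by nlinarith [T_nonneg P hsq_0 s x, sq_nonneg C], T_le P (hh_meas.pow_const 2) hsq_0 hsq_C s x⟩)
      have hint2 : Integrable (fun x => (Th x) ^ 2) μ :=
        hsq_int _ C hTh_meas (habs _ hTh_0 hTh_C)
      have hIeq : ∫ x, (T P s (fun y => (hfun y) ^ 2) x - (Th x) ^ 2) ∂μ = 0 := by
        rw [integral_sub hint1 hint2]
        have e1 : ∫ x, T P s (fun y => (hfun y) ^ 2) x ∂μ = δ := by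
          rw [integral_T P μ hinv (hh_meas.pow_const 2) hsq_0 hsq_C s]; exact hQh
        have e2 : ∫ x, (Th x) ^ 2 ∂μ = δ := hQTh
        rw [e1, e2, sub_self]
      have hptw : ∀ x, (0:ℝ) ≤ T P s (fun y => (hfun y) ^ 2) x - (Th x) ^ 2 := fun x =>
        sub_nonneg.2 (jensen_sq hh_meas (C := C) hh_abs)
      have := (integral_eq_zero_iff_of_nonneg_ae (ae_of_all _ hptw)
        (hint1.sub hint2)).1 hIeq
      filter_upwards [this] with x hx
      have hx' : T P s (fun y => (hfun y) ^ 2) x - (Th x) ^ 2 = 0 := hx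
      linarith [hx']
    -- conclude: variance zero pointwise a.e.
    filter_upwards [hfixa, hjeq] with x hTx hJx
    have hint_h : Integrable hfun ((P s) x) := integrable_of_bounds hh_meas hh_abs
    have hint_h2 : Integrable (fun y => (hfun y) ^ 2) ((P s) x) := by
      refine (integrable_const (C ^ 2)).mono'
        (hh_meas.pow_const 2).aestronglyMeasurable (ae_of_all _ fun y => ?_)
      rw [Real.norm_eq_abs]
      exact hsq_bd _ C hh_abs y
    have hcomp : ∫ y, (hfun y - hfun x) ^ 2 ∂((P s) x) = 0 := by
      have hexp : ∀ y, (hfun y - hfun x) ^ 2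
          = ((hfun y) ^ 2 - 2 * hfun x * hfun y) + (hfun x) ^ 2 := fun y => by ring
      have e0 : ∫ y, (hfun y - hfun x) ^ 2 ∂((P s) x)
          = ∫ y, (((hfun y) ^ 2 - 2 * hfun x * hfun y) + (hfun x) ^ 2) ∂((P s) x) :=
        integral_congr_ae (ae_of_all _ hexp)
      have iA : Integrable (fun y => (hfun y) ^ 2 - 2 * hfun x * hfun y) ((P s) x) :=
        hint_h2.sub (hint_h.const_mul _)
      rw [e0, integral_add iA (integrable_const _),
        integral_sub hint_h2 (hint_h.const_mul _), integral_const_mul, integral_const]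
      have e1 : ∫ y, hfun y ∂((P s) x) = hfun x := hTx
      have e2 : ∫ y, (hfun y) ^ 2 ∂((P s) x) = (hfun x) ^ 2 := by
        have : T P s (fun y => (hfun y) ^ 2) x = ∫ y, (hfun y) ^ 2 ∂((P s) x) := rfl
        rw [← this, hJx, hTx]
      rw [e1, e2]
      simp only [probReal_univ, smul_eq_mul, one_mul]
      ring
    have hintc : Integrable (fun y => (hfun y - hfun x) ^ 2) ((P s) x) := by
      refine (integrable_const ((2*C) ^ 2)).mono'
        ((hh_meas.sub measurable_const).pow_const 2).aestronglyMeasurable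
        (ae_of_all _ fun y => ?_)
      rw [Real.norm_eq_abs]
      refine hsq_bd (fun z => hfun z - hfun x) (2*C) (fun z => ?_) y
      calc |hfun z - hfun x| ≤ |hfun z| + |hfun x| := abs_sub _ _
        _ ≤ 2 * C := by linarith [hh_abs z, hh_abs x]
    have := (integral_eq_zero_iff_of_nonneg_ae
      (ae_of_all _ fun y => sq_nonneg (hfun y - hfun x)) hintc).1 hcomp
    have hae : ∀ᵐ y ∂((P s) x), hfun y = hfun x := by
      filter_upwards [this] with y hy
      have hy' : (hfun y - hfun x) ^ 2 = 0 := hy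
      exact sub_eq_zero.1 (pow_eq_zero_iff two_ne_zero |>.1 hy')
    exact ae_iff.1 hae
  -- Part D: ergodicity
  set A : Set X := {x | m < hfun x} with hA
  have hAm : MeasurableSet A := measurableSet_lt measurable_const hh_meas
  have hind : ∀ t : ℝ≥0, ∀ᵐ x ∂μ, ((P t) x) A = A.indicator (fun _ => (1:ℝ≥0∞)) x := by
    intro t
    filter_upwards [hvar t] with x hx
    by_cases hxA : x ∈ A
    · have h1 : ((P t) x) Aᶜ = 0 := by
        refine measure_mono_null (fun y hy => ?_) hx
        have hy' : ¬ (m < hfun y) := hy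
        have hxA' : m < hfun x := hxA
        show hfun y ≠ hfun x
        intro he; rw [he] at hy'; exact hy' hxA'
      have h2 : ((P t) x) A = 1 := (prob_compl_eq_zero_iff hAm).1 h1
      rw [h2, indicator_of_mem hxA]
    · have h1 : ((P t) x) A = 0 := by
        refine measure_mono_null (fun y hy => ?_) hx
        have hy' : m < hfun y := hy
        have hxA' : ¬ (m < hfun x) := hxA
        show hfun y ≠ hfun x
        intro he; rw [he] at hy'; exact hxA' hy'
      rw [h1, indicator_of_notMem hxA]
  rcases herg A hAm hind with hA0 | hA1
  · have hae : ∀ᵐ x ∂μ, hfun x ≤ m := by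
      have h1 : ∀ᵐ x ∂μ, x ∉ A := by
        rw [ae_iff]
        convert hA0 using 2
        ext x; simp
      filter_upwards [h1] with x hx
      exact not_lt.1 hx
    calc Ig = ∫ x, hfun x ∂μ := hIh.symm
      _ ≤ ∫ _x, m ∂μ :=
          integral_mono_ae (hint hfun hh_meas hh_0 hh_C) (integrable_const m) hae
      _ = m := by simp [measure_univ]
  · exfalso
    have hAc : μ Aᶜ = 0 := (prob_compl_eq_zero_iff hAm).2 hA1
    have hBA : μ (B ∩ A) = 0 := by
      refine measure_mono_null (fun x hx => ?_) (ae_iff.1 hBh)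
      simp only [mem_setOf_eq]
      push_neg
      exact ⟨hx.1, hx.2⟩
    have hsub : B ⊆ (B ∩ A) ∪ Aᶜ := by
      intro x hx
      by_cases h : x ∈ A
      · exact Or.inl ⟨hx, h⟩
      · exact Or.inr h
    have : μ B ≤ μ (B ∩ A) + μ Aᶜ := (measure_mono hsub).trans (measure_union_le _ _)
    rw [hBA, hAc] at this
    simp only [add_zero, nonpos_iff_eq_zero] at this
    exact hBpos.ne' this





end Stmt6Aux

theorem stmt6 {X : Type*} [MeasurableSpace X]
    (P : ℝ≥0 → Kernel X X) [∀ t, IsMarkovKernel (P t)]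
    (hsem : ∀ s t : ℝ≥0, P (s + t) = (P t).comp (P s))
    (μ : Measure X) [IsProbabilityMeasure μ]
    (hinv : ∀ t, μ.bind (fun x => P t x) = μ)
    (herg : ∀ A : Set X, MeasurableSet A →
      (∀ t, ∀ᵐ x ∂μ, (P t) x A = A.indicator (fun _ => (1 : ℝ≥0∞)) x) →
      μ A = 0 ∨ μ A = 1)
    (f : X → ℝ) (hf : Measurable f)
    (Xbar : Set X) (hXbar : MeasurableSet Xbar) (hpos : 0 < μ Xbar)
    (hbound : ∀ x ∈ Xbar, (⨆ t : ℝ≥0, ∫⁻ y, ENNReal.ofReal |f y| ∂((P t) x)) < ⊤) :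
    Integrable f μ := by
  classical
  have hGmeas : ∀ t : ℝ≥0,
      Measurable fun x => ∫⁻ y, ENNReal.ofReal |f y| ∂((P t) x) := fun t =>
    Measurable.lintegral_kernel (κ := P t) hf.abs.ennreal_ofReal
  -- find a positive outer measure level set
  set Xm : ℕ → Set X := fun n =>
    {x ∈ Xbar | ∀ t : ℝ≥0, (∫⁻ y, ENNReal.ofReal |f y| ∂((P t) x)) ≤ n} with hXm
  have hXm_mono : Monotone Xm := by
    intro a b hab x hx
    exact ⟨hx.1, fun t => (hx.2 t).trans (by exact_mod_cast Nat.cast_le.2 hab)⟩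
  have hXm_cover : Xbar ⊆ ⋃ n, Xm n := by
    intro x hx
    obtain ⟨n, hn⟩ := ENNReal.exists_nat_gt (hbound x hx).ne
    refine mem_iUnion.2 ⟨n, hx, fun t => ?_⟩
    exact le_trans (le_iSup (fun t : ℝ≥0 => ∫⁻ y, ENNReal.ofReal |f y| ∂((P t) x)) t) hn.le
  have hpos' : 0 < ⨆ n, μ (Xm n) := by
    rw [← Monotone.measure_iUnion hXm_mono]
    exact lt_of_lt_of_le hpos (measure_mono hXm_cover)
  have hex : ∃ n, 0 < μ (Xm n) := by
    by_contra h
    push_neg at h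
    simp only [nonpos_iff_eq_zero] at h
    simp [h] at hpos'
  obtain ⟨n, hn⟩ := hex
  set B : Set X := toMeasurable μ (Xm n) with hB
  have hBm : MeasurableSet B := measurableSet_toMeasurable μ _
  have hBμ : μ B = μ (Xm n) := measure_toMeasurable _
  have hBpos : 0 < μ B := by rw [hBμ]; exact hn
  have hBbound : ∀ t : ℝ≥0, ∀ᵐ x ∂μ, x ∈ B →
      ∫⁻ y, ENNReal.ofReal |f y| ∂((P t) x) ≤ ENNReal.ofReal (n : ℝ) := by
    intro t
    rw [ENNReal.ofReal_natCast]
    set Sbad : Set X := B ∩ {x | (n : ℝ≥0∞) < ∫⁻ y, ENNReal.ofReal |f y| ∂((P t) x)}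
      with hSbad
    have hSm : MeasurableSet Sbad :=
      hBm.inter (measurableSet_lt measurable_const (hGmeas t))
    have hSsub : Sbad ⊆ B := inter_subset_left
    have hXmBS : Xm n ⊆ B \ Sbad := by
      intro x hx
      refine ⟨subset_toMeasurable μ _ hx, fun hmem => ?_⟩
      exact absurd (hx.2 t) (not_le.2 hmem.2)
    have hzero : μ Sbad = 0 := by
      by_contra hne
      have h1 : μ (B \ Sbad) < μ B := by
        rw [measure_diff hSsub hSm.nullMeasurableSet (measure_ne_top μ _)]
        refine ENNReal.sub_lt_self (measure_ne_top μ _) ?_ hne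
        exact fun h0 => hne (nonpos_iff_eq_zero.1 (h0 ▸ measure_mono hSsub))
      have h2 : μ B ≤ μ (B \ Sbad) := hBμ ▸ measure_mono hXmBS
      exact absurd h2 (not_le.2 h1)
    rw [ae_iff]
    refine measure_mono_null (fun x hx => ?_) hzero
    simp only [mem_setOf_eq] at hx
    push_neg at hx
    exact ⟨hx.1, hx.2⟩
  -- uniform bound on truncations
  have hK : ∀ K : ℕ, ∫⁻ x, ENNReal.ofReal (min |f x| K) ∂μ ≤ (n : ℝ≥0∞) := by
    intro K
    have hmeasK : Measurable fun x => min |f x| (K : ℝ) := hf.abs.min measurable_const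
    have h0K : ∀ x, 0 ≤ min |f x| (K : ℝ) := fun x =>
      le_min (abs_nonneg _) (Nat.cast_nonneg _)
    have h1 : ∫ x, min |f x| (K : ℝ) ∂μ ≤ (n : ℝ) :=
      Stmt6Aux.key P hsem μ hinv herg f hf B hBm hBpos (n : ℝ) (Nat.cast_nonneg n)
        hBbound (fun x => min |f x| (K : ℝ)) (K : ℝ) hmeasK h0K
        (fun x => min_le_right _ _) (fun x => min_le_left _ _)
    have hintK : Integrable (fun x => min |f x| (K : ℝ)) μ := by
      refine (integrable_const (K : ℝ)).mono' hmeasK.aestronglyMeasurable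
        (ae_of_all _ fun x => ?_)
      rw [Real.norm_eq_abs, abs_of_nonneg (h0K x)]
      exact min_le_right _ _
    calc ∫⁻ x, ENNReal.ofReal (min |f x| (K : ℝ)) ∂μ
        = ENNReal.ofReal (∫ x, min |f x| (K : ℝ) ∂μ) :=
          (ofReal_integral_eq_lintegral_ofReal hintK (ae_of_all _ h0K)).symm
      _ ≤ ENNReal.ofReal (n : ℝ) := ENNReal.ofReal_le_ofReal h1
      _ = (n : ℝ≥0∞) := ENNReal.ofReal_natCast n
  -- monotone convergence
  have hfin : ∫⁻ x, ENNReal.ofReal |f x| ∂μ ≤ (n : ℝ≥0∞) := by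
    have hsup : ∀ x, (⨆ K : ℕ, ENNReal.ofReal (min |f x| K)) = ENNReal.ofReal |f x| := by
      intro x
      apply le_antisymm
      · exact iSup_le fun K => ENNReal.ofReal_le_ofReal (min_le_left _ _)
      · obtain ⟨K, hKx⟩ := exists_nat_ge |f x|
        refine le_trans (le_of_eq ?_) (le_iSup (fun K : ℕ => ENNReal.ofReal (min |f x| K)) K)
        rw [min_eq_left hKx]
    have hmono : Monotone fun (K : ℕ) (x : X) => ENNReal.ofReal (min |f x| K) := by
      intro a b hab x
      exact ENNReal.ofReal_le_ofReal (min_le_min le_rfl (Nat.cast_le.2 hab))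
    calc ∫⁻ x, ENNReal.ofReal |f x| ∂μ
        = ∫⁻ x, ⨆ K : ℕ, ENNReal.ofReal (min |f x| K) ∂μ := by
          refine lintegral_congr fun x => (hsup x).symm
      _ = ⨆ K : ℕ, ∫⁻ x, ENNReal.ofReal (min |f x| K) ∂μ :=
          lintegral_iSup (fun K => (hf.abs.min measurable_const).ennreal_ofReal) hmono
      _ ≤ (n : ℝ≥0∞) := iSup_le hK
  refine ⟨hf.aestronglyMeasurable, ?_⟩
  rw [hasFiniteIntegral_iff_norm]
  have : ∫⁻ x, ENNReal.ofReal ‖f x‖ ∂μ = ∫⁻ x, ENNReal.ofReal |f x| ∂μ :=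
    lintegral_congr fun x => by rw [Real.norm_eq_abs]
  rw [this]
  exact lt_of_le_of_lt hfin (ENNReal.natCast_lt_top n)
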